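/- (Theorem 1) Let N ≥ 2 and let T be a tree on vertex set Fin N. Then there exist angles θ_v (namely all equal to π/2) such that the one-round iHVA-tree state ψ obtained by applying the gates e^{−iθ_v Z_{parent(v)}Y_v/2} (in any hierarchy-respecting order) to |+⟩^{⊗N} satisfies ⟨ψ| Ĉ |ψ⟩ = N−1, and N−1 equals the maximum cut size max_x C(x) of T; i.e. the one-round iHVA-tree achieves the MaxCut of an arbitrary tree exactly. -/

import Mathlib

open Matrix

noncomputable section

/-- An `N`-qubit state: a vector in `ℂ^({0,1}^N)` indexed by bit strings. -/
abbrev QState (N : ℕ) := (Fin N → Fin 2) → ℂ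

/-- An `N`-qubit operator: a `2^N × 2^N` complex matrix indexed by bit strings. -/
abbrev QOp (N : ℕ) := Matrix (Fin N → Fin 2) (Fin N → Fin 2) ℂ

def PauliX : Matrix (Fin 2) (Fin 2) ℂ := !![0, 1; 1, 0]
def PauliY : Matrix (Fin 2) (Fin 2) ℂ := !![0, -Complex.I; Complex.I, 0]
def PauliZ : Matrix (Fin 2) (Fin 2) ℂ := !![1, 0; 0, -1]

/-- The Kronecker (tensor) product `⊗ₖ P k` of one `2 × 2` matrix per qubit. -/
def pauliString {N : ℕ} (P : Fin N → Matrix (Fin 2) (Fin 2) ℂ) : QOp N :=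
  fun x y => ∏ k, P k (x k) (y k)

/-- The operator acting as `A` on qubit `i`, `B` on qubit `j` and identity elsewhere. -/
def twoQubitOp {N : ℕ} (A B : Matrix (Fin 2) (Fin 2) ℂ) (i j : Fin N) : QOp N :=
  pauliString (fun k => if k = i then A else if k = j then B else 1)

/-- Computational basis vector `|x⟩`. -/
def ket {N : ℕ} (x : Fin N → Fin 2) : QState N := fun y => if y = x then 1 else 0

/-- `|+⟩^{⊗N}`, the uniform vector with all coordinates `2^{-N/2}`. -/
def plusN (N : ℕ) : QState N := fun _ => (((Real.sqrt 2)⁻¹ : ℝ) : ℂ) ^ N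

/-- Expectation value `⟨ψ| A |ψ⟩`. -/
def expval {N : ℕ} (ψ : QState N) (A : QOp N) : ℂ :=
  ∑ x, (starRingEnd ℂ) (ψ x) * (A *ᵥ ψ) x

/-- The set of edges of `G`, each listed once as an ordered pair `(i,j)` with `i < j`. -/
def edgePairs {N : ℕ} (G : SimpleGraph (Fin N)) [DecidableRel G.Adj] :
    Finset (Fin N × Fin N) :=
  Finset.univ.filter (fun p : Fin N × Fin N => p.1 < p.2 ∧ G.Adj p.1 p.2)

/-- The cut size `C(x)`: the number of edges `(i,j)` of `G` with `x i ≠ x j`. -/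
def cutSize {N : ℕ} (G : SimpleGraph (Fin N)) [DecidableRel G.Adj] (x : Fin N → Fin 2) : ℕ :=
  ((edgePairs G).filter (fun p => x p.1 ≠ x p.2)).card

/-- The MaxCut Hamiltonian `H_MC = ∑_{(i,j) ∈ E} Z_i Z_j`. -/
def HMC {N : ℕ} (G : SimpleGraph (Fin N)) [DecidableRel G.Adj] : QOp N :=
  ∑ p ∈ edgePairs G, twoQubitOp PauliZ PauliZ p.1 p.2

/-- The cut-counting observable `Ĉ = (1/2) ∑_{(i,j) ∈ E} (1 - Z_i Z_j)`. -/
def Chat {N : ℕ} (G : SimpleGraph (Fin N)) [DecidableRel G.Adj] : QOp N :=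
  (1/2 : ℂ) • ∑ p ∈ edgePairs G, ((1 : QOp N) - twoQubitOp PauliZ PauliZ p.1 p.2)

/-- The gate `e^{-iθ Z_i Y_j / 2}`. -/
def gateZY {N : ℕ} (θ : ℝ) (i j : Fin N) : QOp N :=
  NormedSpace.exp ((-Complex.I * ((θ : ℂ) / 2)) • twoQubitOp PauliZ PauliY i j)

/-- The gate `e^{-iθ Y_i Z_j / 2}`. -/
def gateYZ {N : ℕ} (θ : ℝ) (i j : Fin N) : QOp N :=
  NormedSpace.exp ((-Complex.I * ((θ : ℂ) / 2)) • twoQubitOp PauliY PauliZ i j)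

end

noncomputable section

lemma pauliString_mul {N : ℕ} (P Q : Fin N → Matrix (Fin 2) (Fin 2) ℂ) :
    (pauliString P) * (pauliString Q) = pauliString (fun k => P k * Q k) := by
  ext x y
  simp only [pauliString, Matrix.mul_apply]
  rw [Finset.prod_univ_sum]
  rw [← Fintype.piFinset_univ]
  congr 1
  funext z
  rw [Finset.prod_mul_distrib]

lemma pauliString_one {N : ℕ} : (pauliString (fun _ => 1) : QOp N) = 1 := by
  ext x y
  simp only [pauliString, Matrix.one_apply]
  by_cases h : x = y
  · subst h; simp
  · obtain ⟨k, hk⟩ := Function.ne_iff.mp h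
    rw [if_neg h]
    exact Finset.prod_eq_zero (Finset.mem_univ k) (by simp [Matrix.one_apply, hk])

lemma ZY_sq {N : ℕ} {i j : Fin N} (hij : i ≠ j) :
    twoQubitOp PauliZ PauliY i j * twoQubitOp PauliZ PauliY i j = 1 := by
  have hZ : PauliZ * PauliZ = 1 := by
    rw [PauliZ, Matrix.mul_fin_two, Matrix.one_fin_two]; norm_num
  have hY : PauliY * PauliY = 1 := by
    rw [PauliY, Matrix.mul_fin_two, Matrix.one_fin_two]; norm_num [Complex.I_mul_I]
  rw [twoQubitOp, pauliString_mul, ← pauliString_one]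
  apply congrArg
  funext k
  by_cases h1 : k = i
  · simp [h1, hZ]
  · by_cases h2 : k = j
    · simp [h1, h2, hY, Ne.symm hij]
    · simp [h1, h2]

lemma exp_of_sq_one {N : ℕ} (M : QOp N) (h : M * M = 1) (θ : ℝ) :
    NormedSpace.exp ((-Complex.I * ((θ : ℂ) / 2)) • M)
      = Complex.cos ((θ : ℂ)/2) • (1 : QOp N)
        + Complex.sin ((θ : ℂ)/2) • ((-Complex.I) • M) := by
  letI : NormedRing (QOp N) := Matrix.linftyOpNormedRing
  letI : NormedAlgebra ℂ (QOp N) := Matrix.linftyOpNormedAlgebra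
  set z : ℂ := (θ : ℂ)/2 with hz
  set c : ℂ := -Complex.I * z with hc
  have hM2 : ∀ k : ℕ, M ^ (2 * k) = 1 := by
    intro k; rw [pow_mul, pow_two, h, one_pow]
  have hM2' : ∀ k : ℕ, M ^ (2 * k + 1) = M := by
    intro k; rw [pow_succ, hM2, one_mul]
  have hc2 : ∀ k : ℕ, c ^ (2 * k) = (-1) ^ k * z ^ (2 * k) := by
    intro k
    rw [hc, mul_pow, pow_mul (-Complex.I), neg_pow, Complex.I_sq]
    norm_num
  have hc2' : ∀ k : ℕ, c ^ (2 * k + 1) = ((-1) ^ k * z ^ (2 * k + 1)) * (-Complex.I) := by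
    intro k
    rw [pow_succ, hc2, hc, pow_succ]
    ring
  rw [NormedSpace.exp_eq_tsum (𝕂 := ℂ)]
  refine HasSum.tsum_eq ?_
  refine HasSum.even_add_odd ?_ ?_
  · convert (Complex.hasSum_cos z).smul_const (1 : QOp N) using 2 with k
    · rfl
    rw [smul_pow, hM2, hc2, smul_smul]
    congr 1
    field_simp
  · convert (Complex.hasSum_sin z).smul_const ((-Complex.I) • M) using 2 with k
    · rfl
    rw [smul_pow, hM2', smul_smul, smul_smul]
    congr 1
    rw [hc2']
    field_simp

lemma PauliZ_apply (a b : Fin 2) :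
    PauliZ a b = if a = b then (if a = 0 then 1 else -1) else 0 := by
  fin_cases a <;> fin_cases b <;> simp [PauliZ]

lemma PauliY_apply (a b : Fin 2) :
    PauliY a b = if a = b then 0 else (if a = 0 then -Complex.I else Complex.I) := by
  fin_cases a <;> fin_cases b <;> simp [PauliY]

lemma fin2_ne_add_one (a b : Fin 2) (h : a ≠ b + 1) : a = b := by omega

lemma twoQubitZY_mulVec {N : ℕ} {i j : Fin N} (hij : i ≠ j) (ψ : QState N) (x : Fin N → Fin 2) :
    (twoQubitOp PauliZ PauliY i j *ᵥ ψ) x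
      = ((if x i = 0 then 1 else -1) * (if x j = 0 then -Complex.I else Complex.I))
          * ψ (Function.update x j (x j + 1)) := by
  set y₀ := Function.update x j (x j + 1) with hy₀
  have hy₀j : y₀ j = x j + 1 := by simp [hy₀]
  have hy₀k : ∀ k, k ≠ j → y₀ k = x k := by
    intro k hk; simp [hy₀, Function.update_of_ne hk]
  rw [Matrix.mulVec, dotProduct]
  rw [Finset.sum_eq_single y₀]
  · congr 1
    show pauliString _ x y₀ = _
    rw [pauliString]
    rw [← Finset.prod_subset (Finset.subset_univ ({i, j} : Finset (Fin N)))
      (fun k _ hk => ?_)]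
    · rw [Finset.prod_pair hij]
      rw [if_pos rfl, if_neg (Ne.symm hij), if_pos rfl]
      rw [hy₀k i hij, hy₀j, PauliZ_apply, PauliY_apply]
      simp
    · simp only [Finset.mem_insert, Finset.mem_singleton, not_or] at hk
      rw [if_neg hk.1, if_neg hk.2, hy₀k k hk.2, Matrix.one_apply_eq]
  · intro y _ hy
    obtain ⟨k, hk⟩ := Function.ne_iff.mp hy
    apply mul_eq_zero_of_left
    show pauliString _ x y = 0
    refine Finset.prod_eq_zero (Finset.mem_univ k) ?_
    show (if k = i then PauliZ else if k = j then PauliY else 1) (x k) (y k) = 0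
    by_cases hkj : k = j
    · subst hkj
      have hyk : y k = x k := fin2_ne_add_one _ _ (by rw [← hy₀j]; exact hk)
      rw [if_neg (Ne.symm hij), if_pos rfl, PauliY_apply, hyk, if_pos rfl]
    · have hyk : y k ≠ x k := by rw [← hy₀k k hkj]; exact hk
      by_cases hki : k = i
      · rw [if_pos hki, PauliZ_apply, if_neg (Ne.symm hyk)]
      · rw [if_neg hki, if_neg hkj, Matrix.one_apply_ne (Ne.symm hyk)]
  · intro h; exact absurd (Finset.mem_univ y₀) h

lemma gate_mulVec {N : ℕ} {i j : Fin N} (hij : i ≠ j) (ψ : QState N) (x : Fin N → Fin 2) :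
    (gateZY (Real.pi/2) i j *ᵥ ψ) x
      = ((Real.sqrt 2 / 2 : ℝ) : ℂ)
          * (ψ x - (if x i = x j then 1 else -1) * ψ (Function.update x j (x j + 1))) := by
  have hM := ZY_sq hij
  have hcos : Complex.cos (((Real.pi/2 : ℝ) : ℂ)/2) = ((Real.sqrt 2 / 2 : ℝ) : ℂ) := by
    have : (((Real.pi/2 : ℝ) : ℂ)/2) = ((Real.pi/4 : ℝ) : ℂ) := by push_cast; ring
    rw [this, ← Complex.ofReal_cos, Real.cos_pi_div_four]
  have hsin : Complex.sin (((Real.pi/2 : ℝ) : ℂ)/2) = ((Real.sqrt 2 / 2 : ℝ) : ℂ) := by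
    have : (((Real.pi/2 : ℝ) : ℂ)/2) = ((Real.pi/4 : ℝ) : ℂ) := by push_cast; ring
    rw [this, ← Complex.ofReal_sin, Real.sin_pi_div_four]
  rw [gateZY, exp_of_sq_one _ hM, Matrix.add_mulVec, Matrix.smul_mulVec,
    Matrix.smul_mulVec, Matrix.one_mulVec, hcos, hsin]
  rw [Matrix.smul_mulVec]
  simp only [Pi.add_apply, Pi.smul_apply, smul_eq_mul]
  rw [twoQubitZY_mulVec hij]
  have hI : Complex.I * Complex.I = -1 := Complex.I_mul_I
  by_cases h1 : x i = 0 <;> by_cases h2 : x j = 0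
  · rw [h1, h2]; norm_num; ring_nf; rw [Complex.I_sq]; ring
  · rw [h1, show x j = 1 by omega]; norm_num; ring_nf; rw [Complex.I_sq]; ring
  · rw [show x i = 1 by omega, h2]; norm_num; ring_nf; rw [Complex.I_sq]; ring
  · rw [show x i = 1 by omega, show x j = 1 by omega]; norm_num; ring_nf; rw [Complex.I_sq]; ring

def factor {N : ℕ} (parent : Fin N → Fin N) (x : Fin N → Fin 2) (v : Fin N) : ℂ :=
  ((Real.sqrt 2 / 2 : ℝ) : ℂ) * (1 - if x (parent v) = x v then 1 else -1)

lemma foldl_formula {N : ℕ} (parent : Fin N → Fin N) (L₁ : List (Fin N))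
    (hnd : L₁.Nodup) (hpv : ∀ v ∈ L₁, parent v ≠ v)
    (hpw : L₁.Pairwise (fun u v => parent u ≠ v)) :
    L₁.foldl (fun ψ v => gateZY (Real.pi/2) (parent v) v *ᵥ ψ) (plusN N)
      = fun x => plusN N x * (L₁.map (factor parent x)).prod := by
  induction L₁ using List.reverseRecOn with
  | nil => simp
  | append_singleton A v IH =>
    have hndA : A.Nodup := (List.nodup_append'.mp hnd).1
    have hvA : v ∉ A := by
      have := (List.nodup_append'.mp hnd).2.2
      intro hv; exact this hv (List.mem_singleton_self v)
    have hpwA : A.Pairwise (fun u v => parent u ≠ v) :=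
      (List.pairwise_append.mp hpw).1
    have hparA : ∀ u ∈ A, parent u ≠ v := by
      intro u hu
      exact (List.pairwise_append.mp hpw).2.2 u hu v (List.mem_singleton_self v)
    have hpvv : parent v ≠ v := hpv v (by simp)
    rw [List.foldl_append, List.foldl_cons, List.foldl_nil,
      IH hndA (fun u hu => hpv u (by simp [hu])) hpwA]
    funext x
    rw [gate_mulVec hpvv]
    have hindep : (A.map (factor parent (Function.update x v (x v + 1)))).prod
        = (A.map (factor parent x)).prod := by
      congr 1
      apply List.map_congr_left
      intro u hu
      have h1 : parent u ≠ v := hparA u hu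
      have h2 : u ≠ v := fun h => hvA (h ▸ hu)
      rw [factor, factor, Function.update_of_ne h1, Function.update_of_ne h2]
    simp only [plusN, hindep]
    rw [List.map_append, List.prod_append, List.map_singleton, List.prod_singleton, factor]
    ring

lemma ZZ_mulVec {N : ℕ} {i j : Fin N} (hij : i ≠ j) (ψ : QState N) (x : Fin N → Fin 2) :
    (twoQubitOp PauliZ PauliZ i j *ᵥ ψ) x = (if x i = x j then 1 else -1) * ψ x := by
  rw [Matrix.mulVec, dotProduct]
  rw [Finset.sum_eq_single x]
  · congr 1
    show pauliString _ x x = _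
    rw [pauliString]
    rw [← Finset.prod_subset (Finset.subset_univ ({i, j} : Finset (Fin N)))
      (fun k _ hk => ?_)]
    · rw [Finset.prod_pair hij]
      rw [if_pos rfl, if_neg (Ne.symm hij), if_pos rfl, PauliZ_apply, PauliZ_apply]
      by_cases h1 : x i = 0 <;> by_cases h2 : x j = 0
      · rw [h1, h2]; norm_num
      · rw [h1, show x j = 1 by omega]; norm_num
      · rw [show x i = 1 by omega, h2]; norm_num
      · rw [show x i = 1 by omega, show x j = 1 by omega]; norm_num
    · simp only [Finset.mem_insert, Finset.mem_singleton, not_or] at hk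
      rw [if_neg hk.1, if_neg hk.2, Matrix.one_apply_eq]
  · intro y _ hy
    obtain ⟨k, hk⟩ := Function.ne_iff.mp hy
    apply mul_eq_zero_of_left
    show pauliString _ x y = 0
    refine Finset.prod_eq_zero (Finset.mem_univ k) ?_
    show (if k = i then PauliZ else if k = j then PauliZ else 1) (x k) (y k) = 0
    have hyk : y k ≠ x k := hk
    by_cases hki : k = i
    · rw [if_pos hki, PauliZ_apply, if_neg (Ne.symm hyk)]
    · by_cases hkj : k = j
      · rw [if_neg hki, if_pos hkj, PauliZ_apply, if_neg (Ne.symm hyk)]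
      · rw [if_neg hki, if_neg hkj, Matrix.one_apply_ne (Ne.symm hyk)]
  · intro h; exact absurd (Finset.mem_univ x) h

lemma sum_mulVec {N : ℕ} {α : Type*} (s : Finset α) (A : α → QOp N) (ψ : QState N)
    (x : Fin N → Fin 2) :
    ((∑ a ∈ s, A a) *ᵥ ψ) x = ∑ a ∈ s, (A a *ᵥ ψ) x := by
  simp only [Matrix.mulVec, dotProduct, Matrix.sum_apply, Finset.sum_mul]
  rw [Finset.sum_comm]

lemma Chat_mulVec {N : ℕ} (G : SimpleGraph (Fin N)) [DecidableRel G.Adj]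
    (ψ : QState N) (x : Fin N → Fin 2) :
    (Chat G *ᵥ ψ) x = (cutSize G x : ℂ) * ψ x := by
  rw [Chat, Matrix.smul_mulVec]
  simp only [Pi.smul_apply, smul_eq_mul]
  rw [sum_mulVec]
  have : ∀ p ∈ edgePairs G, (((1 : QOp N) - twoQubitOp PauliZ PauliZ p.1 p.2) *ᵥ ψ) x
      = (if x p.1 ≠ x p.2 then (2:ℂ) else 0) * ψ x := by
    intro p hp
    have hij : p.1 ≠ p.2 := by
      have := (Finset.mem_filter.mp hp).2.1
      exact ne_of_lt this
    rw [Matrix.sub_mulVec, Pi.sub_apply, Matrix.one_mulVec, ZZ_mulVec hij]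
    by_cases h : x p.1 = x p.2 <;> simp [h] <;> ring
  rw [Finset.sum_congr rfl this, ← Finset.sum_mul, ← Finset.sum_filter, cutSize]
  rw [Finset.sum_const]
  push_cast
  ring

lemma fin2_ne_succ : ∀ a : Fin 2, a ≠ a + 1 := by decide
lemma fin2_eq_add_one : ∀ a b : Fin 2, a ≠ b → b = a + 1 := by decide
lemma fin2_cases : ∀ a : Fin 2, a = 0 ∨ a = 1 := by decide

end

open Fin.NatCast

/-- **Theorem 1.** The MaxCut of an arbitrary tree on `Fin N` (`N ≥ 2`) is
achieved exactly by the one-round iHVA-tree: there exist angles (namely all `π/2`) such that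
the resulting state `ψ` satisfies `⟨ψ| Ĉ |ψ⟩ = N − 1`, and `N − 1` is the maximum cut size. -/
theorem iHVA_tree_solves_maxcut_of_tree {N : ℕ} (hN : 2 ≤ N)
    (T : SimpleGraph (Fin N)) [DecidableRel T.Adj] (hT : T.IsTree) (r : Fin N)
    (parent : Fin N → Fin N)
    (hparent : ∀ v, v ≠ r → T.Adj (parent v) v ∧ T.dist r (parent v) + 1 = T.dist r v)
    (L : List (Fin N)) (hnodup : L.Nodup) (hmem : ∀ v, v ∈ L ↔ v ≠ r)
    (horder : ∀ v ∈ L, parent v ≠ r → L.idxOf (parent v) < L.idxOf v) :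
    ∃ θ : Fin N → ℝ, (∀ v, θ v = Real.pi / 2) ∧
      expval (L.foldl (fun ψ v => gateZY (θ v) (parent v) v *ᵥ ψ) (plusN N)) (Chat T)
        = (N : ℂ) - 1 ∧
      Finset.univ.sup (cutSize T) = N - 1 := by

  -- basic graph facts
  have hEcard : T.edgeFinset.card = N - 1 := by
    have := hT.card_edgeFinset
    rw [Fintype.card_fin] at this
    omega
  have hpne : ∀ v, v ≠ r → parent v ≠ v := fun v hv => (hparent v hv).1.ne
  -- parent edges cover all edges
  have himg : (Finset.univ.erase r).image (fun v => s(parent v, v)) = T.edgeFinset := by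
    apply Finset.eq_of_subset_of_card_le
    · intro e he
      obtain ⟨v, hv, rfl⟩ := Finset.mem_image.mp he
      have hv' : v ≠ r := (Finset.mem_erase.mp hv).1
      exact SimpleGraph.mem_edgeFinset.mpr ((hparent v hv').1)
    · rw [hEcard, Finset.card_image_of_injOn]
      · rw [Finset.card_erase_of_mem (Finset.mem_univ r), Finset.card_univ, Fintype.card_fin]
      · intro u hu v hv he
        simp only [Finset.coe_erase, Set.mem_diff, Finset.coe_univ, Set.mem_univ,
          Set.mem_singleton_iff, true_and] at hu hv
        rcases Sym2.eq_iff.mp he with ⟨h1, h2⟩ | ⟨h1, h2⟩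
        · exact h2
        · have d1 := (hparent u hu).2
          have d2 := (hparent v hv).2
          rw [h1] at d1
          rw [← h2] at d2
          omega
  have hedge : ∀ p ∈ edgePairs T, ∃ v, v ≠ r ∧
      ((parent v = p.1 ∧ v = p.2) ∨ (parent v = p.2 ∧ v = p.1)) := by
    intro p hp
    have hadj : T.Adj p.1 p.2 := (Finset.mem_filter.mp hp).2.2
    have : s(p.1, p.2) ∈ T.edgeFinset := SimpleGraph.mem_edgeFinset.mpr hadj
    rw [← himg] at this
    obtain ⟨v, hv, he⟩ := Finset.mem_image.mp this
    exact ⟨v, (Finset.mem_erase.mp hv).1, Sym2.eq_iff.mp he⟩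
  have hPcard : (edgePairs T).card = N - 1 := by
    rw [← hEcard]
    apply Finset.card_bij (fun p _ => s(p.1, p.2))
    · intro p hp
      exact SimpleGraph.mem_edgeFinset.mpr (Finset.mem_filter.mp hp).2.2
    · intro p hp q hq he
      have hp' := (Finset.mem_filter.mp hp).2.1
      have hq' := (Finset.mem_filter.mp hq).2.1
      rcases Sym2.eq_iff.mp he with ⟨h1, h2⟩ | ⟨h1, h2⟩
      · exact Prod.ext h1 h2
      · exfalso
        rw [h1, h2] at hp'
        exact absurd (lt_trans hp' hq') (lt_irrefl _)
    · intro e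
      refine Sym2.ind (fun a b he => ?_) e
      have hadj : T.Adj a b := by rwa [SimpleGraph.mem_edgeFinset, SimpleGraph.mem_edgeSet] at he
      rcases lt_or_gt_of_ne hadj.ne with h | h
      · exact ⟨(a, b), Finset.mem_filter.mpr ⟨Finset.mem_univ _, ⟨h, hadj⟩⟩, rfl⟩
      · exact ⟨(b, a), Finset.mem_filter.mpr ⟨Finset.mem_univ _, ⟨h, hadj.symm⟩⟩, Sym2.eq_swap⟩
  -- the two bipartition colorings
  set y : Fin 2 → (Fin N → Fin 2) := fun b v => b + ((T.dist r v : ℕ) : Fin 2) with hy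
  have hflip : ∀ b v, v ≠ r → y b (parent v) ≠ y b v := by
    intro b v hv
    have hd := (hparent v hv).2
    simp only [hy]
    rw [← hd]
    push_cast
    intro h
    exact fin2_ne_succ _ (by rw [← add_assoc] at h; exact h)
  have hcuty : ∀ b p, p ∈ edgePairs T → y b p.1 ≠ y b p.2 := by
    intro b p hp
    obtain ⟨v, hv, h | h⟩ := hedge p hp
    · rw [← h.1, ← h.2]; exact hflip b v hv
    · rw [← h.1, ← h.2]; exact (hflip b v hv).symm
  have hcutsize : ∀ b, cutSize T (y b) = N - 1 := by
    intro b
    rw [cutSize, Finset.filter_true_of_mem (fun p hp => hcuty b p hp), hPcard]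
  -- uniqueness of flip colorings
  have huniq : ∀ x : Fin N → Fin 2, (∀ v, v ≠ r → x (parent v) ≠ x v) → x = y (x r) := by
    intro x hx
    have key : ∀ n v, T.dist r v = n → x v = x r + (n : Fin 2) := by
      intro n
      induction n using Nat.strong_induction_on with
      | _ n IH =>
        intro v hdv
        by_cases hv : v = r
        · subst hv
          rw [SimpleGraph.dist_self] at hdv
          rw [← hdv]
          simp
        · have hd := (hparent v hv).2
          have hlt : T.dist r (parent v) < n := by omega
          have hp := IH _ hlt (parent v) rfl
          have hxv : x v = x (parent v) + 1 := fin2_eq_add_one _ _ (hx v hv)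
          rw [hxv, hp, ← hdv, ← hd]
          push_cast
          open Fin.CommRing in ring
    funext v
    exact key (T.dist r v) v rfl
  refine ⟨fun _ => Real.pi / 2, fun _ => rfl, ?_, ?_⟩
  · -- expectation value
    have hLlen : L.length = N - 1 := by
      have h1 : L.toFinset = Finset.univ.erase r := by
        ext v
        simp [List.mem_toFinset, hmem v, Finset.mem_erase]
      have h2 := List.toFinset_card_of_nodup hnodup
      rw [h1, Finset.card_erase_of_mem (Finset.mem_univ r), Finset.card_univ,
        Fintype.card_fin] at h2
      omega
    have hpw : L.Pairwise (fun u v => parent u ≠ v) := by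
      rw [List.pairwise_iff_getElem]
      intro a b ha hb hab hpe
      have hbne : L[b] ≠ r := (hmem _).mp (List.getElem_mem _)
      have h := horder L[a] (List.getElem_mem _) (by rw [hpe]; exact hbne)
      rw [hpe, List.Nodup.idxOf_getElem hnodup, List.Nodup.idxOf_getElem hnodup] at h
      omega
    have hfold := foldl_formula parent L hnodup (fun v hv => hpne v ((hmem v).mp hv)) hpw
    have hψ : (L.foldl (fun ψ v => gateZY ((fun _ => Real.pi / 2) v) (parent v) v *ᵥ ψ)
        (plusN N)) = fun x => plusN N x * (L.map (factor parent x)).prod := hfold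
    rw [expval, hψ]
    have hterm : ∀ x : Fin N → Fin 2,
        (starRingEnd ℂ) (plusN N x * (L.map (factor parent x)).prod)
          * ((Chat T *ᵥ fun x => plusN N x * (L.map (factor parent x)).prod) x)
        = (starRingEnd ℂ) (plusN N x * (L.map (factor parent x)).prod)
          * ((cutSize T x : ℂ) * (plusN N x * (L.map (factor parent x)).prod)) := by
      intro x
      rw [Chat_mulVec]
    rw [Finset.sum_congr rfl (fun x _ => hterm x)]
    have hsupp : ∀ x : Fin N → Fin 2, x ∉ ({y 0, y 1} : Finset (Fin N → Fin 2)) →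
        plusN N x * (L.map (factor parent x)).prod = 0 := by
      intro x hx
      rcases Classical.em (∀ v, v ≠ r → x (parent v) ≠ x v) with hall | hnall
      · exfalso
        apply hx
        rw [huniq x hall]
        rcases fin2_cases (x r) with h | h <;> rw [h] <;> simp
      · push_neg at hnall
        obtain ⟨v, hv, heq⟩ := hnall
        apply mul_eq_zero_of_right
        apply List.prod_eq_zero
        refine List.mem_map.mpr ⟨v, (hmem v).mpr hv, ?_⟩
        rw [factor, if_pos heq]
        ring
    rw [← Finset.sum_subset (Finset.subset_univ ({y 0, y 1} : Finset (Fin N → Fin 2)))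
      (fun x _ hx => by rw [hsupp x hx]; simp)]
    have hy01 : y 0 ≠ y 1 := by
      intro h
      have := congrFun h r
      simp only [hy, SimpleGraph.dist_self, Nat.cast_zero, add_zero] at this
      exact absurd this (by decide)
    rw [Finset.sum_pair hy01]
    have hψval : ∀ b, plusN N (y b) * ((L.map (factor parent (y b))).prod)
        = ((((Real.sqrt 2)⁻¹ ^ N * Real.sqrt 2 ^ (N-1) : ℝ)) : ℂ) := by
      intro b
      have hconst : ∀ z ∈ L.map (factor parent (y b)), z = ((Real.sqrt 2 : ℝ) : ℂ) := by
        intro z hz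
        obtain ⟨v, hvL, rfl⟩ := List.mem_map.mp hz
        have hvr := (hmem v).mp hvL
        rw [factor, if_neg (hflip b v hvr)]
        push_cast
        ring
      rw [List.prod_eq_pow_card _ _ hconst, List.length_map, hLlen, plusN]
      push_cast
      ring
    have ht2 : (((Real.sqrt 2)⁻¹ ^ N * Real.sqrt 2 ^ (N-1) : ℝ))
        * (((Real.sqrt 2)⁻¹ ^ N * Real.sqrt 2 ^ (N-1) : ℝ)) = 1/2 := by
      have h2 : Real.sqrt 2 * Real.sqrt 2 = 2 := Real.mul_self_sqrt (by norm_num)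
      have step : (((Real.sqrt 2)⁻¹ ^ N * Real.sqrt 2 ^ (N-1) : ℝ))
          * (((Real.sqrt 2)⁻¹ ^ N * Real.sqrt 2 ^ (N-1) : ℝ))
          = ((Real.sqrt 2 * Real.sqrt 2)⁻¹) ^ N * (Real.sqrt 2 * Real.sqrt 2) ^ (N-1) := by
        rw [mul_inv]
        ring
      rw [step, h2]
      have hNpow : (2:ℝ)^N = 2^(N-1) * 2 := by
        rw [← pow_succ]
        congr 1
        omega
      rw [inv_pow, hNpow]
      field_simp
    rw [hψval 0, hψval 1, hcutsize 0, hcutsize 1, Complex.conj_ofReal]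
    have : ((N - 1 : ℕ) : ℂ) = (N : ℂ) - 1 := by
      push_cast [Nat.cast_sub (by omega : 1 ≤ N)]
      ring
    rw [this]
    have ht2' : ((((Real.sqrt 2)⁻¹ ^ N * Real.sqrt 2 ^ (N-1) : ℝ)) : ℂ)
        * ((((Real.sqrt 2)⁻¹ ^ N * Real.sqrt 2 ^ (N-1) : ℝ)) : ℂ) = 1/2 := by
      rw [← Complex.ofReal_mul, ht2]
      norm_num
    calc ((((Real.sqrt 2)⁻¹ ^ N * Real.sqrt 2 ^ (N-1) : ℝ)) : ℂ)
          * (((N:ℂ) - 1) * ((((Real.sqrt 2)⁻¹ ^ N * Real.sqrt 2 ^ (N-1) : ℝ)) : ℂ))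
        + ((((Real.sqrt 2)⁻¹ ^ N * Real.sqrt 2 ^ (N-1) : ℝ)) : ℂ)
          * (((N:ℂ) - 1) * ((((Real.sqrt 2)⁻¹ ^ N * Real.sqrt 2 ^ (N-1) : ℝ)) : ℂ))
        = 2 * (((((Real.sqrt 2)⁻¹ ^ N * Real.sqrt 2 ^ (N-1) : ℝ)) : ℂ)
            * ((((Real.sqrt 2)⁻¹ ^ N * Real.sqrt 2 ^ (N-1) : ℝ)) : ℂ)) * ((N:ℂ) - 1) := by
          ring
      _ = (N : ℂ) - 1 := by rw [ht2']; ring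
  · -- max cut value
    apply le_antisymm
    · apply Finset.sup_le
      intro x _
      rw [cutSize]
      exact (Finset.card_filter_le _ _).trans_eq hPcard
    · rw [← hcutsize 0]
      exact Finset.le_sup (Finset.mem_univ (y 0))
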